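/- There exists a constant C > 0 with the following property. Define F₃(t) = ∫₁^t exp(−ν(γ₁(t) − γ₁(s))) f₃(s) ds for t ∈ [1,T], where f₃ : [1,T] → ℂ is continuous. Then sup_{t ∈ [1,T]} e^{a ν^{1/3} t} |F₃(t)| ≤ C ν^{−1/2} (∫₁^T e^{2 a ν^{1/3} s} γ(s)^{−1} |f₃(s)|² ds)^{1/2}, and ∫₁^T e^{2 a ν^{1/3} t} |F₃(t)|² dt ≤ C ν^{−4/3} ∫₁^T e^{2 a ν^{1/3} s} γ(s)^{−1} |f₃(s)|² ds. The constant C is independent of ν, T, a, k, l, η, f₃. -/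

import Mathlib

open MeasureTheory intervalIntegral Set

lemma cs_int (f g : ℝ → ℝ) (x y : ℝ) (hxy : x ≤ y) (hf : Continuous f) (hg : Continuous g) :
    (∫ u in x..y, f u * g u) ^ 2 ≤ (∫ u in x..y, f u ^ 2) * (∫ u in x..y, g u ^ 2) := by
  set A := ∫ u in x..y, f u ^ 2 with hA
  set B := ∫ u in x..y, g u ^ 2 with hB
  set C := ∫ u in x..y, f u * g u with hC
  have hB0 : 0 ≤ B := intervalIntegral.integral_nonneg hxy (fun u _ => sq_nonneg _)
  have hA0 : 0 ≤ A := intervalIntegral.integral_nonneg hxy (fun u _ => sq_nonneg _)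
  have key : ∀ L : ℝ, 0 ≤ A - 2*L*C + L^2*B := by
    intro L
    have h0 : 0 ≤ ∫ u in x..y, (f u - L * g u)^2 :=
      intervalIntegral.integral_nonneg hxy (fun u _ => sq_nonneg _)
    have hexp : (∫ u in x..y, (f u - L * g u)^2) = A - 2*L*C + L^2*B := by
      have h1 : ∀ u : ℝ, (f u - L * g u)^2
          = f u ^ 2 - (2*L) * (f u * g u) + L^2 * (g u ^2) := by intro u; ring
      simp only [h1]
      rw [intervalIntegral.integral_add, intervalIntegral.integral_sub,
        intervalIntegral.integral_const_mul, intervalIntegral.integral_const_mul]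
      · exact ((hf.pow 2).intervalIntegrable x y)
      · exact ((continuous_const.mul (hf.mul hg)).intervalIntegrable x y)
      · exact (((hf.pow 2).sub (continuous_const.mul (hf.mul hg))).intervalIntegrable x y)
      · exact ((continuous_const.mul (hg.pow 2)).intervalIntegrable x y)
    linarith [h0, hexp ▸ h0]
  rcases eq_or_lt_of_le hB0 with hB1 | hB1
  · rcases eq_or_ne C 0 with hC0 | hC0
    · rw [← hB1, hC0]; norm_num
    · exfalso
      have h1 := key ((A+1)/(2*C))
      rw [← hB1] at h1
      have : A - 2*((A+1)/(2*C))*C = -1 := by field_simp; ring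
      linarith [this ▸ h1, h1]
  · have h2 := key (C/B)
    have : A - 2*(C/B)*C + (C/B)^2*B = A - C^2/B := by field_simp; ring
    rw [this] at h2
    have := (div_le_iff₀ hB1).mp (by linarith : C^2/B ≤ A)
    linarith [this]

lemma scal (x : ℝ) (hx : 0 ≤ x) : 9*x ≤ 17 + 3*x^3 := by
  nlinarith [mul_nonneg hx (sq_nonneg (x-1)), sq_nonneg (x-1)]

lemma cubic_int (η K s t : ℝ) (hst : s ≤ t) (hK : 1 ≤ K^2) :
    (t-s)^3/12 ≤ ∫ τ in s..t, (η - K*τ)^2 := by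
  have hder : ∀ τ ∈ uIcc s t, HasDerivAt (fun τ : ℝ => η^2*τ - η*K*τ^2 + K^2*τ^3/3)
      ((η - K*τ)^2) τ := by
    intro τ _
    have h1 : HasDerivAt (fun τ : ℝ => η^2*τ - η*K*τ^2 + K^2*τ^3/3)
        (η^2*1 - η*K*(2*τ) + K^2*(3*τ^2)/3) τ := by
      have ha : HasDerivAt (fun τ : ℝ => η^2*τ) (η^2*1) τ := (hasDerivAt_id τ).const_mul (η^2)
      have hb : HasDerivAt (fun τ : ℝ => η*K*τ^2) (η*K*(2*τ)) τ := by
        simpa using ((hasDerivAt_pow 2 τ).const_mul (η*K))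
      have hc : HasDerivAt (fun τ : ℝ => K^2*τ^3/3) (K^2*(3*τ^2)/3) τ := by
        simpa using (((hasDerivAt_pow 3 τ).const_mul (K^2)).div_const 3)
      exact (ha.sub hb).add hc
    convert h1 using 1; ring
  have heq := intervalIntegral.integral_eq_sub_of_hasDerivAt hder
    (((continuous_const.sub (continuous_const.mul continuous_id)).pow 2).intervalIntegrable s t)
  rw [heq]
  nlinarith [mul_nonneg (sub_nonneg.2 hst) (sq_nonneg (2*η - K*(s+t))),
    mul_le_mul_of_nonneg_right hK (pow_nonneg (sub_nonneg.2 hst) 3)]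

lemma exp_int (b s T : ℝ) (hb : 0 < b) (hsT : s ≤ T) :
    ∫ t in s..T, Real.exp (-(b*(t-s))) = (1 - Real.exp (-(b*(T-s))))/b := by
  have hder : ∀ t ∈ uIcc s T, HasDerivAt (fun t : ℝ => -(Real.exp (-(b*(t-s))))/b)
      (Real.exp (-(b*(t-s)))) t := by
    intro t _
    have h1 : HasDerivAt (fun t : ℝ => -(b*(t-s))) (-b) t := by
      exact (((hasDerivAt_id t).sub_const s).const_mul b).neg.congr_deriv (by ring)
    have h2 := (h1.exp.neg).div_const b
    refine h2.congr_deriv ?_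
    rw [mul_neg, neg_neg, mul_div_assoc, div_self hb.ne', mul_one]
  rw [intervalIntegral.integral_eq_sub_of_hasDerivAt hder
    ((Real.continuous_exp.comp (continuous_const.mul ((continuous_id.sub continuous_const))).neg).intervalIntegrable s T)]
  simp only [sub_self, mul_zero, neg_zero, Real.exp_zero]
  ring

lemma weight_int (γ γ₁ : ℝ → ℝ) (hγc : Continuous γ) (hd : ∀ s, HasDerivAt γ₁ (γ s) s)
    (ν x t : ℝ) (hν : 0 < ν) (hxt : x ≤ t) :
    ∫ s in x..t, γ s * Real.exp (-(ν * (γ₁ t - γ₁ s))) ≤ 1/ν := by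
  have hγ₁c : Continuous γ₁ := by
    rw [continuous_iff_continuousAt]; exact fun s => (hd s).continuousAt
  have hder : ∀ s ∈ uIcc x t, HasDerivAt (fun s : ℝ => Real.exp (-(ν * (γ₁ t - γ₁ s)))/ν)
      (γ s * Real.exp (-(ν * (γ₁ t - γ₁ s)))) s := by
    intro s _
    have h1 : HasDerivAt (fun s : ℝ => -(ν * (γ₁ t - γ₁ s))) (ν * γ s) s := by
      exact (((hd s).const_sub (γ₁ t)).const_mul ν).neg.congr_deriv (by ring)
    have h2 := (h1.exp).div_const ν
    refine h2.congr_deriv ?_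
    rw [mul_div_assoc, mul_div_cancel_left₀ _ hν.ne']
    ring
  have hcont : Continuous fun s => γ s * Real.exp (-(ν * (γ₁ t - γ₁ s))) :=
    hγc.mul (Real.continuous_exp.comp (continuous_const.mul ((continuous_const.sub hγ₁c))).neg)
  rw [intervalIntegral.integral_eq_sub_of_hasDerivAt hder (hcont.intervalIntegrable x t)]
  simp only [sub_self, mul_zero, neg_zero, Real.exp_zero]
  have := Real.exp_nonneg (-(ν * (γ₁ t - γ₁ x)))
  rw [div_sub_div_same]
  gcongr
  linarith

lemma tri_swap (W : ℝ → ℝ) (hW : Continuous W) (hWpos : ∀ s, 0 ≤ W s)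
    (b : ℝ) (hb : 0 < b) (T : ℝ) (hT : 1 ≤ T) :
    (∫ t in (1:ℝ)..T, (∫ s in (1:ℝ)..t, Real.exp (-(b*(t-s))) * W s)) ≤
      b⁻¹ * ∫ s in (1:ℝ)..T, W s := by
  set μ := volume.restrict (Ioc (1:ℝ) T) with hμ
  set F : ℝ × ℝ → ℝ := fun p => Real.exp (-(b*(p.1-p.2))) * W p.2 with hF
  have hFc : Continuous F := by
    apply Continuous.mul
    · exact Real.continuous_exp.comp (continuous_const.mul (continuous_fst.sub continuous_snd)).neg
    · exact hW.comp continuous_snd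
  set D : Set (ℝ × ℝ) := {p : ℝ × ℝ | p.2 ≤ p.1} with hD
  have hDm : MeasurableSet D := measurableSet_le measurable_snd measurable_fst
  set H : ℝ × ℝ → ℝ := D.indicator F with hH
  have hInt : Integrable H (μ.prod μ) := by
    apply Integrable.indicator _ hDm
    rw [hμ, Measure.prod_restrict]
    have h1 : IntegrableOn F (Icc (1:ℝ) T ×ˢ Icc (1:ℝ) T) (volume.prod volume) := by
      rw [← Measure.volume_eq_prod]
      exact hFc.continuousOn.integrableOn_compact (isCompact_Icc.prod isCompact_Icc)
    exact h1.mono_set (prod_mono Ioc_subset_Icc_self Ioc_subset_Icc_self)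
  have swap : (∫ t, (∫ s, H (t, s) ∂μ) ∂μ) = ∫ s, (∫ t, H (t, s) ∂μ) ∂μ :=
    integral_integral_swap hInt
  have hLHS : (∫ t in (1:ℝ)..T, (∫ s in (1:ℝ)..t, Real.exp (-(b*(t-s))) * W s))
      = ∫ t, (∫ s, H (t, s) ∂μ) ∂μ := by
    rw [intervalIntegral.integral_of_le hT, hμ]
    apply setIntegral_congr_fun measurableSet_Ioc
    intro t ht
    dsimp only
    have h1 : (fun s => H (t, s)) = (Iic t).indicator (fun s => F (t, s)) := by
      funext s
      simp only [hH, hD, Set.indicator_apply, mem_setOf_eq, mem_Iic]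
    rw [h1, MeasureTheory.integral_indicator measurableSet_Iic,
      Measure.restrict_restrict measurableSet_Iic]
    have h2 : Iic t ∩ Ioc 1 T = Ioc 1 t := by
      ext u
      simp only [mem_inter_iff, mem_Iic, mem_Ioc]
      constructor
      · rintro ⟨h1, h2, h3⟩; exact ⟨h2, h1⟩
      · rintro ⟨h1, h2⟩; exact ⟨h2, h1, h2.trans ht.2⟩
    rw [h2, intervalIntegral.integral_of_le ht.1.le]
  have hRHS : (∫ s, (∫ t, H (t, s) ∂μ) ∂μ) ≤ b⁻¹ * ∫ s in (1:ℝ)..T, W s := by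
    have key : ∀ s ∈ Ioc (1:ℝ) T, (∫ t, H (t, s) ∂μ)
        = (1 - Real.exp (-(b*(T-s))))/b * W s := by
      intro s hs
      have h1 : (fun t => H (t, s)) = (Ici s).indicator (fun t => F (t, s)) := by
        funext t
        simp only [hH, hD, Set.indicator_apply, mem_setOf_eq, mem_Ici]
      rw [h1, hμ, MeasureTheory.integral_indicator measurableSet_Ici,
        Measure.restrict_restrict measurableSet_Ici]
      have h2 : Ici s ∩ Ioc 1 T = Icc s T := by
        ext u
        simp only [mem_inter_iff, mem_Ici, mem_Ioc, mem_Icc]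
        constructor
        · rintro ⟨h1, h2, h3⟩; exact ⟨h1, h3⟩
        · rintro ⟨h1, h2⟩; exact ⟨h1, hs.1.trans_le h1, h2⟩
      rw [h2, integral_Icc_eq_integral_Ioc, ← intervalIntegral.integral_of_le hs.2]
      have h3 : (∫ t in s..T, F (t, s)) = (∫ t in s..T, Real.exp (-(b*(t-s)))) * W s := by
        rw [← intervalIntegral.integral_mul_const]
      rw [h3, exp_int b s T hb hs.2]
    rw [hμ, setIntegral_congr_fun measurableSet_Ioc key]
    have h4 : (∫ s in Ioc (1:ℝ) T, (1 - Real.exp (-(b*(T-s))))/b * W s)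
        ≤ ∫ s in Ioc (1:ℝ) T, b⁻¹ * W s := by
      apply setIntegral_mono_on
      · apply Continuous.integrableOn_Ioc
        exact (((continuous_const.sub (Real.continuous_exp.comp
          (continuous_const.mul (continuous_const.sub continuous_id)).neg)).div_const b).mul hW)
      · exact (continuous_const.mul hW).integrableOn_Ioc
      · exact measurableSet_Ioc
      · intro s _
        have he : 0 ≤ Real.exp (-(b*(T-s))) := Real.exp_nonneg _
        have : (1 - Real.exp (-(b*(T-s))))/b ≤ b⁻¹ := by
          rw [div_le_iff₀ hb]
          field_simp
          linarith
        exact mul_le_mul_of_nonneg_right this (hWpos s)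
    calc (∫ s in Ioc (1:ℝ) T, (1 - Real.exp (-(b*(T-s))))/b * W s)
        ≤ ∫ s in Ioc (1:ℝ) T, b⁻¹ * W s := h4
      _ = b⁻¹ * ∫ s in (1:ℝ)..T, W s := by
          rw [intervalIntegral.integral_of_le hT, MeasureTheory.integral_const_mul]
  rw [hLHS, swap]
  exact hRHS

theorem stmt8 : ∃ C : ℝ, 0 < C ∧ ∀ (ν T a : ℝ) (k l : ℤ) (η : ℝ) (f₃ : ℝ → ℂ),
    0 < ν → ν < 1 → 1 < T → 0 ≤ a → a ≤ 4 → k ≠ 0 →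
    ContinuousOn f₃ (Set.Icc 1 T) →
    ∀ γ γ₁ : ℝ → ℝ,
    (∀ t, γ t = (2 * Real.pi) ^ 2 * ((k : ℝ) ^ 2 + (η - (k : ℝ) * t) ^ 2 + (l : ℝ) ^ 2)) →
    (∀ t, γ₁ t = ∫ s in (1:ℝ)..t, γ s) →
    ∀ F₃ : ℝ → ℂ,
    (∀ t, F₃ t = ∫ s in (1:ℝ)..t,
        (Real.exp (-(ν * (γ₁ t - γ₁ s))) : ℂ) * f₃ s) →
    (∀ t ∈ Set.Icc (1:ℝ) T,
        Real.exp (a * ν ^ ((1:ℝ)/3) * t) * ‖F₃ t‖ ≤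
          C * ν ^ (-(1:ℝ)/2) *
            (∫ s in (1:ℝ)..T,
              Real.exp (2 * a * ν ^ ((1:ℝ)/3) * s) * (γ s)⁻¹ * ‖f₃ s‖ ^ 2) ^ ((1:ℝ)/2)) ∧
    (∫ t in (1:ℝ)..T, Real.exp (2 * a * ν ^ ((1:ℝ)/3) * t) * ‖F₃ t‖ ^ 2) ≤
        C * ν ^ (-(4:ℝ)/3) *
          ∫ s in (1:ℝ)..T, Real.exp (2 * a * ν ^ ((1:ℝ)/3) * s) * (γ s)⁻¹ * ‖f₃ s‖ ^ 2 := by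
  refine ⟨Real.exp 18, Real.exp_pos 18, ?_⟩
  intro ν T a k l η f₃ hν hν1 hT ha0 ha4 hk hf₃ γ γ₁ hγ hγ₁ F₃ hF₃
  have hT1 : (1:ℝ) ≤ T := hT.le
  have hπ : (3:ℝ) < Real.pi := Real.pi_gt_three
  set b := ν ^ ((1:ℝ)/3) with hb
  have hb0 : 0 < b := Real.rpow_pos_of_pos hν _
  have hb3 : b^3 = ν := by
    rw [hb, ← Real.rpow_natCast (ν ^ ((1:ℝ)/3)) 3, ← Real.rpow_mul hν.le]
    norm_num
  -- integer square bound
  have hk2 : (1:ℝ) ≤ (k:ℝ)^2 := by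
    have h1 : (1:ℤ) ≤ k^2 := by
      rcases lt_or_gt_of_ne hk with h | h
      · nlinarith
      · nlinarith
    exact_mod_cast h1
  -- clamped version of f₃
  set g₃ : ℝ → ℂ := fun s => f₃ (max 1 (min T s)) with hg₃
  have hg₃c : Continuous g₃ := by
    have hmem : ∀ x : ℝ, max 1 (min T x) ∈ Icc (1:ℝ) T :=
      fun x => ⟨le_max_left _ _, max_le hT1 (min_le_left _ _)⟩
    exact hf₃.comp_continuous (continuous_const.max (continuous_const.min continuous_id)) hmem
  have hg₃f : ∀ s ∈ Icc (1:ℝ) T, g₃ s = f₃ s := by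
    intro s hs
    rw [hg₃]
    simp only [min_eq_right hs.2, max_eq_right hs.1]
  -- γ facts
  have hγc : Continuous γ := by
    have : γ = fun t => (2 * Real.pi) ^ 2 * ((k : ℝ) ^ 2 + (η - (k : ℝ) * t) ^ 2 + (l : ℝ) ^ 2) :=
      funext hγ
    rw [this]; fun_prop
  have hγpos : ∀ s, 0 < γ s := by
    intro s
    rw [hγ s]
    nlinarith [sq_nonneg (η - (k:ℝ)*s), sq_nonneg (l:ℝ)]
  have hγ₁d : ∀ t, HasDerivAt γ₁ (γ t) t := by
    intro t
    have h1 : γ₁ = fun t => ∫ s in (1:ℝ)..t, γ s := funext hγ₁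
    rw [h1]
    exact (hγc.integral_hasStrictDerivAt 1 t).hasDerivAt
  have hγ₁c : Continuous γ₁ := by
    rw [continuous_iff_continuousAt]; exact fun s => (hγ₁d s).continuousAt
  -- lower bound on γ₁ increments
  have hΓ : ∀ s t : ℝ, s ≤ t → 3*(t-s)^3 ≤ γ₁ t - γ₁ s := by
    intro s t hst
    have h1 : γ₁ t - γ₁ s = ∫ τ in s..t, γ τ := by
      rw [hγ₁ t, hγ₁ s,
        intervalIntegral.integral_interval_sub_left (hγc.intervalIntegrable 1 t)
          (hγc.intervalIntegrable 1 s)]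
    rw [h1]
    have h2 : (∫ τ in s..t, (2*Real.pi)^2 * (η - (k:ℝ)*τ)^2) ≤ ∫ τ in s..t, γ τ := by
      apply intervalIntegral.integral_mono_on hst
      · exact ((continuous_const.mul ((continuous_const.sub
          (continuous_const.mul continuous_id)).pow 2)).intervalIntegrable s t)
      · exact hγc.intervalIntegrable s t
      · intro τ _
        rw [hγ τ]
        nlinarith [sq_nonneg (η - (k:ℝ)*τ), sq_nonneg (l:ℝ), sq_nonneg (2*Real.pi)]
    have h3 : (∫ τ in s..t, (2*Real.pi)^2 * (η - (k:ℝ)*τ)^2)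
        = (2*Real.pi)^2 * ∫ τ in s..t, (η - (k:ℝ)*τ)^2 :=
      intervalIntegral.integral_const_mul _ _
    have h4 := cubic_int η (k:ℝ) s t hst hk2
    have h5 : (2*Real.pi)^2 * ((t-s)^3/12) ≤ (2*Real.pi)^2 * ∫ τ in s..t, (η - (k:ℝ)*τ)^2 := by
      apply mul_le_mul_of_nonneg_left h4 (sq_nonneg _)
    have hp9 : (9:ℝ) ≤ Real.pi^2 := by nlinarith
    have h6 : 3*(t-s)^3 ≤ (2*Real.pi)^2 * ((t-s)^3/12) := by
      nlinarith [mul_le_mul_of_nonneg_right hp9 (pow_nonneg (sub_nonneg.2 hst) 3)]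
    rw [h3] at h2
    linarith [h2, h5, h6]
  have hΓ0 : ∀ s t : ℝ, s ≤ t → 0 ≤ γ₁ t - γ₁ s := by
    intro s t hst
    have := hΓ s t hst
    nlinarith [pow_nonneg (sub_nonneg.2 hst) 3]
  -- the key exponential estimate
  have hE : ∀ s t : ℝ, s ≤ t → 2*a*b*(t-s) - ν*(γ₁ t - γ₁ s) ≤ 17 - b*(t-s) := by
    intro s t hst
    have hx0 : 0 ≤ b*(t-s) := mul_nonneg hb0.le (sub_nonneg.2 hst)
    have h1 : ν*(3*(t-s)^3) ≤ ν*(γ₁ t - γ₁ s) := mul_le_mul_of_nonneg_left (hΓ s t hst) hν.le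
    have h2 : ν*(3*(t-s)^3) = 3*(b*(t-s))^3 := by rw [← hb3]; ring
    have h3 : 2*a*b*(t-s) ≤ 8*(b*(t-s)) := by nlinarith
    have h4 := scal (b*(t-s)) hx0
    linarith
  -- weight function and its integral
  set W : ℝ → ℝ := fun s => Real.exp (2*a*b*s) * (γ s)⁻¹ * ‖g₃ s‖^2 with hW
  have hWc : Continuous W := by
    apply Continuous.mul
    · exact (Real.continuous_exp.comp (by fun_prop)).mul
        (hγc.inv₀ (fun s => (hγpos s).ne'))
    · exact (hg₃c.norm).pow 2
  have hWpos : ∀ s, 0 ≤ W s := by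
    intro s
    apply mul_nonneg (mul_nonneg (Real.exp_nonneg _) (inv_nonneg.2 (hγpos s).le)) (sq_nonneg _)
  set I : ℝ := ∫ s in (1:ℝ)..T, W s with hI
  have hI0 : 0 ≤ I := intervalIntegral.integral_nonneg hT1 (fun s _ => hWpos s)
  have hIeq : (∫ s in (1:ℝ)..T, Real.exp (2*a*b*s) * (γ s)⁻¹ * ‖f₃ s‖^2) = I := by
    rw [hI]
    apply intervalIntegral.integral_congr
    intro s hs
    rw [uIcc_of_le hT1] at hs
    rw [hW]
    dsimp only
    rw [hg₃f s hs]
  -- helper: continuity of the half-exponential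
  have myexp_sq : ∀ x : ℝ, Real.exp x ^ 2 = Real.exp (2*x) := by
    intro x; rw [sq, ← Real.exp_add]; congr 1; ring
  have core : ∀ t ∈ Icc (1:ℝ) T,
      Real.exp (a*b*t) * ‖F₃ t‖ ≤ Real.sqrt (1/ν) * Real.sqrt (Real.exp 17 * I) ∧
      Real.exp (2*a*b*t) * ‖F₃ t‖^2 ≤
        (Real.exp 17 / ν) * ∫ s in (1:ℝ)..t, Real.exp (-(b*(t-s))) * W s := by
    intro t ht
    obtain ⟨ht1, htT⟩ := ht
    set gg : ℝ → ℝ := fun s => Real.sqrt (γ s) * Real.exp (-(ν * (γ₁ t - γ₁ s))/2) with hggdef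
    set hh : ℝ → ℝ := fun s => Real.exp (a*b*t) *
      (Real.exp (-(ν * (γ₁ t - γ₁ s))/2) * ((Real.sqrt (γ s))⁻¹ * ‖g₃ s‖)) with hhhdef
    have hsqrtpos : ∀ s, 0 < Real.sqrt (γ s) := fun s => Real.sqrt_pos.2 (hγpos s)
    have hec : Continuous fun s : ℝ => Real.exp (-(ν * (γ₁ t - γ₁ s))/2) :=
      Real.continuous_exp.comp (((continuous_const.mul (continuous_const.sub hγ₁c)).neg).div_const 2)
    have hggc : Continuous gg := (Real.continuous_sqrt.comp hγc).mul hec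
    have hhhc : Continuous hh := continuous_const.mul
      (hec.mul (((Real.continuous_sqrt.comp hγc).inv₀ (fun s => (hsqrtpos s).ne')).mul hg₃c.norm))
    have hgg0 : ∀ s, 0 ≤ gg s := fun s => mul_nonneg (Real.sqrt_nonneg _) (Real.exp_nonneg _)
    have hhh0 : ∀ s, 0 ≤ hh s := fun s => mul_nonneg (Real.exp_nonneg _)
      (mul_nonneg (Real.exp_nonneg _)
        (mul_nonneg (inv_nonneg.2 (Real.sqrt_nonneg _)) (norm_nonneg _)))
    have hgh : ∀ s, gg s * hh s
        = Real.exp (a*b*t) * (Real.exp (-(ν * (γ₁ t - γ₁ s))) * ‖g₃ s‖) := by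
      intro s
      have h1 : Real.sqrt (γ s) * (Real.sqrt (γ s))⁻¹ = 1 := mul_inv_cancel₀ (hsqrtpos s).ne'
      have h2 : Real.exp (-(ν * (γ₁ t - γ₁ s))/2) * Real.exp (-(ν * (γ₁ t - γ₁ s))/2)
          = Real.exp (-(ν * (γ₁ t - γ₁ s))) := by
        rw [← Real.exp_add]; congr 1; ring
      calc gg s * hh s
          = (Real.exp (-(ν * (γ₁ t - γ₁ s))/2) * Real.exp (-(ν * (γ₁ t - γ₁ s))/2)) *
            ((Real.sqrt (γ s) * (Real.sqrt (γ s))⁻¹) * (Real.exp (a*b*t) * ‖g₃ s‖)) := by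
            rw [hggdef, hhhdef]; ring
        _ = _ := by rw [h1, h2]; ring
    have step0 : Real.exp (a*b*t) * ‖F₃ t‖ ≤ ∫ s in (1:ℝ)..t, gg s * hh s := by
      have h1 : ‖F₃ t‖ ≤ ∫ s in (1:ℝ)..t, Real.exp (-(ν * (γ₁ t - γ₁ s))) * ‖g₃ s‖ := by
        rw [hF₃ t]
        refine le_trans (intervalIntegral.norm_integral_le_integral_norm ht1) ?_
        apply le_of_eq
        apply intervalIntegral.integral_congr
        intro s hs
        rw [uIcc_of_le ht1] at hs
        dsimp only
        rw [norm_mul, Complex.norm_real, Real.norm_eq_abs, Real.abs_exp,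
          hg₃f s ⟨hs.1, hs.2.trans htT⟩]
      calc Real.exp (a*b*t) * ‖F₃ t‖
          ≤ Real.exp (a*b*t) * ∫ s in (1:ℝ)..t, Real.exp (-(ν * (γ₁ t - γ₁ s))) * ‖g₃ s‖ :=
            mul_le_mul_of_nonneg_left h1 (Real.exp_nonneg _)
        _ = ∫ s in (1:ℝ)..t, Real.exp (a*b*t) * (Real.exp (-(ν * (γ₁ t - γ₁ s))) * ‖g₃ s‖) :=
            (intervalIntegral.integral_const_mul _ _).symm
        _ = ∫ s in (1:ℝ)..t, gg s * hh s := by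
            apply intervalIntegral.integral_congr
            intro s _
            exact (hgh s).symm
    have hCS := cs_int gg hh 1 t ht1 hggc hhhc
    have hg2 : (∫ s in (1:ℝ)..t, gg s ^2) ≤ 1/ν := by
      have h1 : ∀ s : ℝ, gg s ^2 = γ s * Real.exp (-(ν * (γ₁ t - γ₁ s))) := by
        intro s
        rw [hggdef]; dsimp only
        rw [mul_pow, Real.sq_sqrt (hγpos s).le, myexp_sq]
        have : 2*(-(ν * (γ₁ t - γ₁ s))/2) = -(ν * (γ₁ t - γ₁ s)) := by ring
        rw [this]
      calc (∫ s in (1:ℝ)..t, gg s ^2)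
          = ∫ s in (1:ℝ)..t, γ s * Real.exp (-(ν * (γ₁ t - γ₁ s))) := by
            apply intervalIntegral.integral_congr; intro s _; exact h1 s
        _ ≤ 1/ν := weight_int γ γ₁ hγc hγ₁d ν 1 t hν ht1
    have hg2nn : 0 ≤ ∫ s in (1:ℝ)..t, gg s ^ 2 :=
      intervalIntegral.integral_nonneg ht1 (fun s _ => sq_nonneg _)
    have hh2nn : 0 ≤ ∫ s in (1:ℝ)..t, hh s ^ 2 :=
      intervalIntegral.integral_nonneg ht1 (fun s _ => sq_nonneg _)
    have hh2eq : ∀ s : ℝ, hh s ^2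
        = Real.exp (2*a*b*t) * Real.exp (-(ν * (γ₁ t - γ₁ s))) * ((γ s)⁻¹ * ‖g₃ s‖^2) := by
      intro s
      rw [hhhdef]; dsimp only
      rw [mul_pow, mul_pow, mul_pow, myexp_sq, myexp_sq, inv_pow, Real.sq_sqrt (hγpos s).le]
      have e1 : 2*(-(ν * (γ₁ t - γ₁ s))/2) = -(ν * (γ₁ t - γ₁ s)) := by ring
      have e2 : 2*(a*b*t) = 2*a*b*t := by ring
      rw [e1, e2]
      ring
    have hub : ∀ s, s ≤ t → Real.exp (2*a*b*t) * Real.exp (-(ν * (γ₁ t - γ₁ s)))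
        = Real.exp (2*a*b*s) * Real.exp (2*a*b*(t-s) - ν*(γ₁ t - γ₁ s)) := by
      intro s hs
      rw [← Real.exp_add, ← Real.exp_add]; congr 1; ring
    have hh2bsup : ∀ s ∈ Icc (1:ℝ) t, hh s ^2 ≤ Real.exp 17 * W s := by
      intro s hs
      rw [hh2eq s, hub s hs.2, hW]
      dsimp only
      have h2 : Real.exp (2*a*b*(t-s) - ν*(γ₁ t - γ₁ s)) ≤ Real.exp 17 := by
        apply Real.exp_le_exp.2
        have := hE s t hs.2
        have hx0 : 0 ≤ b*(t-s) := mul_nonneg hb0.le (sub_nonneg.2 hs.2)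
        linarith
      have h3 : 0 ≤ (γ s)⁻¹ * ‖g₃ s‖^2 :=
        mul_nonneg (inv_nonneg.2 (hγpos s).le) (sq_nonneg _)
      calc Real.exp (2*a*b*s) * Real.exp (2*a*b*(t-s) - ν*(γ₁ t - γ₁ s)) * ((γ s)⁻¹ * ‖g₃ s‖^2)
          ≤ Real.exp (2*a*b*s) * Real.exp 17 * ((γ s)⁻¹ * ‖g₃ s‖^2) := by
            apply mul_le_mul_of_nonneg_right
              (mul_le_mul_of_nonneg_left h2 (Real.exp_nonneg _)) h3
        _ = Real.exp 17 * (Real.exp (2*a*b*s) * (γ s)⁻¹ * ‖g₃ s‖^2) := by ring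
    have hh2bL2 : ∀ s ∈ Icc (1:ℝ) t, hh s ^2
        ≤ Real.exp 17 * (Real.exp (-(b*(t-s))) * W s) := by
      intro s hs
      rw [hh2eq s, hub s hs.2, hW]
      dsimp only
      have h2 : Real.exp (2*a*b*(t-s) - ν*(γ₁ t - γ₁ s)) ≤ Real.exp 17 * Real.exp (-(b*(t-s))) := by
        rw [← Real.exp_add]
        apply Real.exp_le_exp.2
        have := hE s t hs.2
        linarith
      have h3 : 0 ≤ (γ s)⁻¹ * ‖g₃ s‖^2 :=
        mul_nonneg (inv_nonneg.2 (hγpos s).le) (sq_nonneg _)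
      calc Real.exp (2*a*b*s) * Real.exp (2*a*b*(t-s) - ν*(γ₁ t - γ₁ s)) * ((γ s)⁻¹ * ‖g₃ s‖^2)
          ≤ Real.exp (2*a*b*s) * (Real.exp 17 * Real.exp (-(b*(t-s)))) * ((γ s)⁻¹ * ‖g₃ s‖^2) := by
            apply mul_le_mul_of_nonneg_right
              (mul_le_mul_of_nonneg_left h2 (Real.exp_nonneg _)) h3
        _ = Real.exp 17 * (Real.exp (-(b*(t-s))) * (Real.exp (2*a*b*s) * (γ s)⁻¹ * ‖g₃ s‖^2)) := by
            ring
    have hghnn : 0 ≤ ∫ s in (1:ℝ)..t, gg s * hh s :=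
      intervalIntegral.integral_nonneg ht1 (fun s _ => mul_nonneg (hgg0 s) (hhh0 s))
    constructor
    · -- sup bound
      have hh2sup : (∫ s in (1:ℝ)..t, hh s ^2) ≤ Real.exp 17 * I := by
        calc (∫ s in (1:ℝ)..t, hh s ^2)
            ≤ ∫ s in (1:ℝ)..t, Real.exp 17 * W s :=
              intervalIntegral.integral_mono_on ht1 ((hhhc.pow 2).intervalIntegrable 1 t)
                ((continuous_const.mul hWc).intervalIntegrable 1 t) hh2bsup
          _ = Real.exp 17 * ∫ s in (1:ℝ)..t, W s := intervalIntegral.integral_const_mul _ _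
          _ ≤ Real.exp 17 * I := by
              apply mul_le_mul_of_nonneg_left _ (Real.exp_nonneg _)
              rw [hI]
              exact intervalIntegral.integral_mono_interval (le_refl (1:ℝ)) ht1 htT
                (ae_of_all _ (fun s => hWpos s)) (hWc.intervalIntegrable 1 T)
      have h8 : (∫ s in (1:ℝ)..t, gg s * hh s)^2 ≤ (1/ν) * (Real.exp 17 * I) :=
        le_trans hCS (mul_le_mul hg2 hh2sup hh2nn (by positivity))
      have h9 : (∫ s in (1:ℝ)..t, gg s * hh s) ≤ Real.sqrt ((1/ν) * (Real.exp 17 * I)) := by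
        have h10 := Real.sqrt_le_sqrt h8
        rwa [Real.sqrt_sq hghnn] at h10
      calc Real.exp (a*b*t) * ‖F₃ t‖ ≤ ∫ s in (1:ℝ)..t, gg s * hh s := step0
        _ ≤ Real.sqrt ((1/ν) * (Real.exp 17 * I)) := h9
        _ = Real.sqrt (1/ν) * Real.sqrt (Real.exp 17 * I) := Real.sqrt_mul (by positivity) _
    · -- L2 bound
      have hJnn : 0 ≤ ∫ s in (1:ℝ)..t, Real.exp (-(b*(t-s))) * W s :=
        intervalIntegral.integral_nonneg ht1
          (fun s _ => mul_nonneg (Real.exp_nonneg _) (hWpos s))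
      have h10 : (∫ s in (1:ℝ)..t, hh s ^2)
          ≤ Real.exp 17 * ∫ s in (1:ℝ)..t, Real.exp (-(b*(t-s))) * W s := by
        calc (∫ s in (1:ℝ)..t, hh s ^2)
            ≤ ∫ s in (1:ℝ)..t, Real.exp 17 * (Real.exp (-(b*(t-s))) * W s) :=
              intervalIntegral.integral_mono_on ht1 ((hhhc.pow 2).intervalIntegrable 1 t)
                ((continuous_const.mul ((Real.continuous_exp.comp
                  (continuous_const.mul (continuous_const.sub continuous_id)).neg).mul
                  hWc)).intervalIntegrable 1 t) hh2bL2
          _ = Real.exp 17 * ∫ s in (1:ℝ)..t, Real.exp (-(b*(t-s))) * W s :=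
              intervalIntegral.integral_const_mul _ _
      have h11 : Real.exp (2*a*b*t) * ‖F₃ t‖^2 = (Real.exp (a*b*t) * ‖F₃ t‖)^2 := by
        rw [mul_pow, myexp_sq]
        have : 2*(a*b*t) = 2*a*b*t := by ring
        rw [this]
      have h12 : (Real.exp (a*b*t) * ‖F₃ t‖)^2 ≤ (∫ s in (1:ℝ)..t, gg s * hh s)^2 :=
        pow_le_pow_left₀ (mul_nonneg (Real.exp_nonneg _) (norm_nonneg _)) step0 2
      calc Real.exp (2*a*b*t) * ‖F₃ t‖^2
          = (Real.exp (a*b*t) * ‖F₃ t‖)^2 := h11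
        _ ≤ (∫ s in (1:ℝ)..t, gg s * hh s)^2 := h12
        _ ≤ (∫ s in (1:ℝ)..t, gg s ^2) * (∫ s in (1:ℝ)..t, hh s ^2) := hCS
        _ ≤ (1/ν) * (Real.exp 17 * ∫ s in (1:ℝ)..t, Real.exp (-(b*(t-s))) * W s) :=
            mul_le_mul hg2 h10 hh2nn (by positivity)
        _ = (Real.exp 17 / ν) * ∫ s in (1:ℝ)..t, Real.exp (-(b*(t-s))) * W s := by ring
  constructor
  · -- sup bound
    intro t ht
    rw [hIeq]
    refine le_trans (core t ht).1 ?_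
    have e1 : Real.sqrt (1/ν) = ν ^ (-(1:ℝ)/2) := by
      rw [one_div, Real.sqrt_inv, Real.sqrt_eq_rpow, ← Real.rpow_neg hν.le]
      norm_num
    have e2 : Real.sqrt (Real.exp 17 * I) = Real.sqrt (Real.exp 17) * Real.sqrt I :=
      Real.sqrt_mul (Real.exp_nonneg _) _
    have e3 : Real.sqrt (Real.exp 17) ≤ Real.exp 18 := by
      have h1 : Real.exp 17 ≤ Real.exp 36 := Real.exp_le_exp.2 (by norm_num)
      have h2 : Real.sqrt (Real.exp 36) = Real.exp 18 := by
        rw [show Real.exp 36 = (Real.exp 18)^2 by rw [myexp_sq]; norm_num,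
          Real.sqrt_sq (Real.exp_nonneg _)]
      calc Real.sqrt (Real.exp 17) ≤ Real.sqrt (Real.exp 36) := Real.sqrt_le_sqrt h1
        _ = Real.exp 18 := h2
    have e4 : Real.sqrt I = I ^ ((1:ℝ)/2) := by
      rw [Real.sqrt_eq_rpow]
    calc Real.sqrt (1/ν) * Real.sqrt (Real.exp 17 * I)
        = ν ^ (-(1:ℝ)/2) * (Real.sqrt (Real.exp 17) * (I ^ ((1:ℝ)/2))) := by rw [e1, e2, e4]
      _ ≤ ν ^ (-(1:ℝ)/2) * (Real.exp 18 * I ^ ((1:ℝ)/2)) := by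
          apply mul_le_mul_of_nonneg_left
            (mul_le_mul_of_nonneg_right e3 (Real.rpow_nonneg hI0 _))
            (Real.rpow_nonneg hν.le _)
      _ = Real.exp 18 * ν ^ (-(1:ℝ)/2) * I ^ ((1:ℝ)/2) := by ring
  · -- L² bound
    rw [hIeq]
    have hQc : Continuous fun u : ℝ =>
        ∫ s in (1:ℝ)..u, (↑(Real.exp (ν * γ₁ s)) : ℂ) * g₃ s := by
      rw [continuous_iff_continuousAt]
      intro u
      exact (Continuous.integral_hasStrictDerivAt
        ((Complex.continuous_ofReal.comp
          (Real.continuous_exp.comp (continuous_const.mul hγ₁c))).mul hg₃c) 1 u).hasDerivAt.continuousAt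
    have hF₃eq : EqOn F₃ (fun t => (↑(Real.exp (-(ν * γ₁ t))) : ℂ) *
        ∫ s in (1:ℝ)..t, (↑(Real.exp (ν * γ₁ s)) : ℂ) * g₃ s) (Icc 1 T) := by
      intro t ht
      dsimp only
      rw [hF₃ t, ← intervalIntegral.integral_const_mul]
      apply intervalIntegral.integral_congr
      intro s hs
      rw [uIcc_of_le ht.1] at hs
      dsimp only
      rw [hg₃f s ⟨hs.1, hs.2.trans ht.2⟩, ← mul_assoc]
      congr 1
      rw [← Complex.ofReal_mul, ← Real.exp_add]
      congr 1
      ring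
    have hF₃c : ContinuousOn F₃ (Icc 1 T) := by
      apply ContinuousOn.congr _ hF₃eq
      exact ((Complex.continuous_ofReal.comp
        (Real.continuous_exp.comp (continuous_const.mul hγ₁c).neg)).mul hQc).continuousOn
    have hRc : Continuous fun u : ℝ => ∫ s in (1:ℝ)..u, Real.exp (b*s) * W s := by
      rw [continuous_iff_continuousAt]
      intro u
      exact (Continuous.integral_hasStrictDerivAt
        ((Real.continuous_exp.comp (continuous_const.mul continuous_id)).mul hWc) 1 u).hasDerivAt.continuousAt
    have hJeq : ∀ t : ℝ, (∫ s in (1:ℝ)..t, Real.exp (-(b*(t-s))) * W s)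
        = Real.exp (-(b*t)) * ∫ s in (1:ℝ)..t, Real.exp (b*s) * W s := by
      intro t
      rw [← intervalIntegral.integral_const_mul]
      apply intervalIntegral.integral_congr
      intro s _
      show Real.exp (-(b*(t-s))) * W s = Real.exp (-(b*t)) * (Real.exp (b*s) * W s)
      conv_rhs => rw [← mul_assoc, ← Real.exp_add]
      have : -(b*t) + b*s = -(b*(t-s)) := by ring
      rw [this]
    have hJc : Continuous fun t => ∫ s in (1:ℝ)..t, Real.exp (-(b*(t-s))) * W s := by
      have h1 : (fun t => ∫ s in (1:ℝ)..t, Real.exp (-(b*(t-s))) * W s)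
          = fun t => Real.exp (-(b*t)) * ∫ s in (1:ℝ)..t, Real.exp (b*s) * W s := funext hJeq
      rw [h1]
      exact (Real.continuous_exp.comp (continuous_const.mul continuous_id).neg).mul hRc
    have hPich : (∫ t in (1:ℝ)..T, Real.exp (2*a*b*t) * ‖F₃ t‖^2)
        ≤ ∫ t in (1:ℝ)..T, (Real.exp 17/ν) * ∫ s in (1:ℝ)..t, Real.exp (-(b*(t-s))) * W s := by
      apply intervalIntegral.integral_mono_on hT1
      · apply ContinuousOn.intervalIntegrable
        rw [uIcc_of_le hT1]
        exact ((Real.continuous_exp.comp (by fun_prop : Continuous fun t : ℝ => 2*a*b*t)).continuousOn).mul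
          ((hF₃c.norm).pow 2)
      · exact ((continuous_const.mul hJc).intervalIntegrable 1 T)
      · intro t ht
        exact (core t ht).2
    refine le_trans hPich ?_
    rw [intervalIntegral.integral_const_mul]
    have hTS := tri_swap W hWc hWpos b hb0 T hT1
    have hbI : ν⁻¹ * b⁻¹ = ν ^ (-(4:ℝ)/3) := by
      rw [hb, ← Real.rpow_neg_one ν, ← Real.rpow_neg hν.le, ← Real.rpow_add hν]
      norm_num
    calc (Real.exp 17/ν) * ∫ t in (1:ℝ)..T, ∫ s in (1:ℝ)..t, Real.exp (-(b*(t-s))) * W s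
        ≤ (Real.exp 17/ν) * (b⁻¹ * I) := by
          apply mul_le_mul_of_nonneg_left hTS (by positivity)
      _ = Real.exp 17 * (ν⁻¹ * b⁻¹) * I := by ring
      _ = Real.exp 17 * ν ^ (-(4:ℝ)/3) * I := by rw [hbI]
      _ ≤ Real.exp 18 * ν ^ (-(4:ℝ)/3) * I := by
          apply mul_le_mul_of_nonneg_right
            (mul_le_mul_of_nonneg_right (Real.exp_le_exp.2 (by norm_num))
              (Real.rpow_nonneg hν.le _)) hI0
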